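/- Let s, r ≥ 0 and t ∈ ℝ with t ≤ min(s, r) and s + r − t > 1/2. Then there is a constant C > 0 such that for all two-sided sequences a ∈ h^r and b ∈ h^s, the convolution a*b defined by (a*b)(k) = Σ_{j∈ℤ} a(k−j)b(j) satisfies ‖a*b‖_{h^t} ≤ C‖a‖_{h^r}‖b‖_{h^s}. -/

import Mathlib

/- STATEMENT 0 (Convolution lemma, part I(a)):
For s, r ≥ 0, t ≤ min(s,r), s + r − t > 1/2, the convolution map
h^r × h^s → h^t is bounded:  ‖a*b‖_{h^t} ≤ C ‖a‖_{h^r} ‖b‖_{h^s}.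
Weighted sequence spaces h^s are modelled by their defining
summability condition and norm, with ⟨k⟩ = 1 + |k|. -/

noncomputable section

/-- Convolution of two-sided sequences: `(a*b)(k) = Σ_j a(k−j) b(j)`. -/
def conv (a b : ℤ → ℂ) (k : ℤ) : ℂ := ∑' j : ℤ, a (k - j) * b j

/-- Membership in the weighted space `h^s`. -/
def memh (s : ℝ) (a : ℤ → ℂ) : Prop :=
  Summable fun k : ℤ => ((1 + |k| : ℝ)) ^ (2 * s) * ‖a k‖ ^ 2

/-- The `h^s` norm: `(Σ_k ⟨k⟩^{2s} |a(k)|²)^{1/2}` with `⟨k⟩ = 1 + |k|`. -/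
def hnorm (s : ℝ) (a : ℤ → ℂ) : ℝ :=
  (∑' k : ℤ, ((1 + |k| : ℝ)) ^ (2 * s) * ‖a k‖ ^ 2) ^ ((1 : ℝ) / 2)

open scoped ENNReal
open ENNReal

namespace ConvAux

lemma ofReal_norm_eq_coe_nnnorm {E : Type*} [SeminormedAddGroup E] (x : E) :
    ENNReal.ofReal ‖x‖ = (‖x‖₊ : ℝ≥0∞) := ofReal_norm x

def gz (k : ℤ) : ℝ := 1 + |(k : ℝ)|

lemma one_le_gz (k : ℤ) : 1 ≤ gz k := by simp [gz, abs_nonneg]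

lemma gz_pos (k : ℤ) : 0 < gz k := lt_of_lt_of_le one_pos (one_le_gz k)

lemma gz_tri (k j : ℤ) : gz k ≤ gz (k - j) + gz j := by
  have : |(k:ℝ)| ≤ |((k-j:ℤ):ℝ)| + |(j:ℝ)| := by
    push_cast
    calc |(k:ℝ)| = |((k:ℝ) - j) + j| := by ring_nf
      _ ≤ |(k:ℝ) - j| + |(j:ℝ)| := abs_add_le _ _
  simp only [gz]; linarith

def wgt (x : ℝ) (k : ℤ) : ℝ≥0∞ := ENNReal.ofReal ((gz k) ^ x)


lemma summable_gz_rpow {e : ℝ} (he : 1/2 < e) :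
    Summable (fun k : ℤ => gz k ^ (-(2*e))) := by
  have h1 : Summable (fun k : ℤ => |(k:ℝ)| ^ (-(2*e))) :=
    Real.summable_abs_int_rpow (by linarith)
  have h2 : Summable (fun k : ℤ => if k = 0 then (1:ℝ) else 0) := by
    apply summable_of_ne_finset_zero (s := {0})
    intro k hk
    simp only [Finset.mem_singleton] at hk
    simp [hk]
  refine Summable.of_nonneg_of_le (fun k => (Real.rpow_pos_of_pos (gz_pos k) _).le)
    (fun k => ?_) (h1.add h2)
  by_cases hk : k = 0
  · subst hk
    simp [gz, Real.one_rpow]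
    positivity
  · have hk1 : (1:ℝ) ≤ |(k:ℝ)| := by
      rw [← Int.cast_abs]
      exact_mod_cast Int.one_le_abs (by exact_mod_cast hk)
    have : gz k ^ (-(2*e)) ≤ |(k:ℝ)| ^ (-(2*e)) := by
      apply Real.rpow_le_rpow_of_nonpos (by linarith) (by simp only [gz]; linarith [abs_nonneg (k:ℝ)])
      linarith
    simp only [hk, if_false, add_zero]
    exact this

lemma enn_tsum_norm_le (c : ℤ → ℂ) :
    (‖∑' j, c j‖₊ : ℝ≥0∞) ≤ ∑' j, (‖c j‖₊ : ℝ≥0∞) := by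
  by_cases hc : Summable fun j => ‖c j‖
  · have hc' : Summable c := Summable.of_norm hc
    have h := norm_tsum_le_tsum_norm (f := c) hc
    calc (‖∑' j, c j‖₊ : ℝ≥0∞) = ENNReal.ofReal ‖∑' j, c j‖ :=
          (ofReal_norm_eq_coe_nnnorm _).symm
      _ ≤ ENNReal.ofReal (∑' j, ‖c j‖) := ENNReal.ofReal_le_ofReal h
      _ = ∑' j, ENNReal.ofReal ‖c j‖ :=
          ENNReal.ofReal_tsum_of_nonneg (fun j => norm_nonneg _) hc
      _ = ∑' j, (‖c j‖₊ : ℝ≥0∞) := by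
          apply tsum_congr; intro j; exact ofReal_norm_eq_coe_nnnorm _
  · have hc' : ¬ Summable c := fun h => hc (by
      rw [summable_norm_iff]; exact h)
    rw [tsum_eq_zero_of_not_summable hc']
    simp


-- Cauchy-Schwarz for ENNReal tsums over ℤ
lemma cs2 (f g : ℤ → ℝ≥0∞) :
    (∑' i, f i * g i) ^ 2 ≤ (∑' i, (f i) ^ 2) * (∑' i, (g i) ^ 2) := by
  have hpq : Real.HolderConjugate 2 2 := Real.HolderConjugate.two_two
  have hf : AEMeasurable f (MeasureTheory.Measure.count) := (Measurable.of_discrete (f := f)).aemeasurable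
  have hg : AEMeasurable g (MeasureTheory.Measure.count) := (Measurable.of_discrete (f := g)).aemeasurable
  have h := ENNReal.lintegral_mul_le_Lp_mul_Lq MeasureTheory.Measure.count hpq hf hg
  rw [MeasureTheory.lintegral_count] at h
  simp only [Pi.mul_apply] at h
  have h2 : ∀ u : ℤ → ℝ≥0∞, ∫⁻ a, u a ^ (2:ℝ) ∂MeasureTheory.Measure.count
      = ∑' a, u a ^ 2 := by
    intro u
    rw [MeasureTheory.lintegral_count]
    simp [ENNReal.rpow_two]
  rw [h2 f, h2 g] at h
  calc (∑' i, f i * g i) ^ 2 ≤ ((∑' i, (f i)^2) ^ (1/2:ℝ) * (∑' i, (g i)^2) ^ (1/2:ℝ)) ^ 2 :=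
        pow_le_pow_left' h 2
    _ = (∑' i, (f i) ^ 2) * (∑' i, (g i) ^ 2) := by
        rw [mul_pow]
        congr 1 <;> · rw [← ENNReal.rpow_two, ← ENNReal.rpow_mul]; norm_num

lemma half_sq (x : ℝ≥0∞) : (x ^ (1/2:ℝ)) ^ 2 = x := by
  rw [← ENNReal.rpow_two, ← ENNReal.rpow_mul]; norm_num

-- weighted CS
lemma wcs (u v : ℤ → ℝ≥0∞) :
    (∑' i, u i * v i) ^ 2 ≤ (∑' i, u i) * (∑' i, u i * (v i) ^ 2) := by
  have h := cs2 (fun i => (u i) ^ (1/2:ℝ)) (fun i => (u i) ^ (1/2:ℝ) * v i)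
  calc (∑' i, u i * v i) ^ 2
      = (∑' i, (u i) ^ (1/2:ℝ) * ((u i) ^ (1/2:ℝ) * v i)) ^ 2 := by
        congr 1; apply tsum_congr; intro i
        rw [← mul_assoc, ← sq, half_sq]
    _ ≤ (∑' i, ((u i) ^ (1/2:ℝ)) ^ 2) * (∑' i, ((u i) ^ (1/2:ℝ) * v i) ^ 2) := h
    _ = (∑' i, u i) * (∑' i, u i * (v i) ^ 2) := by
        congr 1 <;> apply tsum_congr <;> intro i
        · rw [half_sq]
        · rw [mul_pow, half_sq]

lemma shift (u : ℤ → ℝ≥0∞) (j : ℤ) : ∑' k, u (k - j) = ∑' k, u k :=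
  (Equiv.subRight j).tsum_eq u

lemma conv_total (u v : ℤ → ℝ≥0∞) :
    ∑' k, ∑' j, u (k - j) * v j = (∑' m, u m) * (∑' j, v j) := by
  rw [ENNReal.tsum_comm]
  calc ∑' j, ∑' k, u (k - j) * v j = ∑' j, (∑' k, u (k - j)) * v j := by
        apply tsum_congr; intro j; rw [ENNReal.tsum_mul_right]
    _ = ∑' j, (∑' m, u m) * v j := by
        apply tsum_congr; intro j; rw [shift]
    _ = (∑' m, u m) * (∑' j, v j) := ENNReal.tsum_mul_left

lemma sq_add3 (u v w : ℝ≥0∞) : (u + v + w) ^ 2 ≤ 9 * (u^2 + v^2 + w^2) := by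
  set M := max u (max v w) with hM
  have h1 : u + v + w ≤ 3 * M := by
    have hu : u ≤ M := le_max_left _ _
    have hv : v ≤ M := le_max_of_le_right (le_max_left _ _)
    have hw : w ≤ M := le_max_of_le_right (le_max_right _ _)
    calc u + v + w ≤ M + M + M := by gcongr
      _ = 3 * M := by ring
  have h2 : M ^ 2 ≤ u^2 + v^2 + w^2 := by
    rcases max_cases u (max v w) with ⟨h, _⟩ | ⟨h, _⟩
    · rw [hM, h]; calc u ^ 2 ≤ u^2 + (v^2 + w^2) := le_self_add
        _ = u^2+v^2+w^2 := by ring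
    · rcases max_cases v w with ⟨h', _⟩ | ⟨h', _⟩
      · rw [hM, h, h']
        calc v^2 ≤ v^2 + (u^2 + w^2) := le_self_add
          _ = u^2+v^2+w^2 := by ring
      · rw [hM, h, h']
        calc w^2 ≤ w^2 + (u^2 + v^2) := le_self_add
          _ = u^2+v^2+w^2 := by ring
  calc (u+v+w)^2 ≤ (3*M)^2 := pow_le_pow_left' h1 2
    _ = 9 * M^2 := by ring
    _ ≤ 9 * (u^2+v^2+w^2) := by gcongr

lemma shift' (u : ℤ → ℝ≥0∞) (k : ℤ) : ∑' i, u (k - i) = ∑' i, u i :=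
  (Equiv.subLeft k).tsum_eq u

open Real in
lemma kernel_real {x y z r s t : ℝ} (hx : 1 ≤ x) (hy : 1 ≤ y) (hz : 1 ≤ z)
    (hxyz : x ≤ y + z) (hs : 0 ≤ s) (hr : 0 ≤ r) (hts : t ≤ s) (htr : t ≤ r) :
    x ^ t ≤ 2 ^ |t| *
      ((x ^ (-(s+r-t)) + y ^ (-(s+r-t)) + z ^ (-(s+r-t))) * (y ^ r * z ^ s)) := by
  set E := s + r - t with hE
  have hx0 : (0:ℝ) < x := lt_of_lt_of_le one_pos hx
  have hy0 : (0:ℝ) < y := lt_of_lt_of_le one_pos hy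
  have hz0 : (0:ℝ) < z := lt_of_lt_of_le one_pos hz
  have h2t : (1:ℝ) ≤ 2 ^ |t| := one_le_rpow one_le_two (abs_nonneg t)
  have hxE := Real.rpow_pos_of_pos hx0 (-E)
  have hyE := Real.rpow_pos_of_pos hy0 (-E)
  have hzE := Real.rpow_pos_of_pos hz0 (-E)
  have hP : (0:ℝ) < y ^ r * z ^ s :=
    mul_pos (Real.rpow_pos_of_pos hy0 r) (Real.rpow_pos_of_pos hz0 s)
  suffices h : x ^ t ≤ 2 ^ |t| * (x ^ (-E) * (y ^ r * z ^ s)) ∨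
      x ^ t ≤ 2 ^ |t| * (y ^ (-E) * (y ^ r * z ^ s)) ∨
      x ^ t ≤ 2 ^ |t| * (z ^ (-E) * (y ^ r * z ^ s)) by
    have h2t0 : (0:ℝ) < 2 ^ |t| := lt_of_lt_of_le one_pos h2t
    rcases h with h | h | h <;>
      [ (calc x ^ t ≤ 2 ^ |t| * (x ^ (-E) * (y ^ r * z ^ s)) := h
          _ ≤ _ := by gcongr; nlinarith);
        (calc x ^ t ≤ 2 ^ |t| * (y ^ (-E) * (y ^ r * z ^ s)) := h
          _ ≤ _ := by gcongr; nlinarith);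
        (calc x ^ t ≤ 2 ^ |t| * (z ^ (-E) * (y ^ r * z ^ s)) := h
          _ ≤ _ := by gcongr; nlinarith)]
  rcases le_total x (min y z) with hxm | hmx
  · -- x is the minimum
    left
    have hxy : x ≤ y := le_trans hxm (min_le_left _ _)
    have hxz : x ≤ z := le_trans hxm (min_le_right _ _)
    have h1 : x ^ t = x ^ (-E) * (x ^ r * x ^ s) := by
      rw [← Real.rpow_add hx0, ← Real.rpow_add hx0, hE]; ring_nf
    rw [h1]
    have h2 : x ^ r ≤ y ^ r := Real.rpow_le_rpow (le_of_lt hx0) hxy hr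
    have h3 : x ^ s ≤ z ^ s := Real.rpow_le_rpow (le_of_lt hx0) hxz hs
    calc x ^ (-E) * (x ^ r * x ^ s) ≤ x ^ (-E) * (y ^ r * z ^ s) := by
          apply mul_le_mul_of_nonneg_left _ hxE.le
          exact mul_le_mul h2 h3 (Real.rpow_pos_of_pos hx0 s).le (Real.rpow_pos_of_pos hy0 r).le
      _ ≤ 2 ^ |t| * (x ^ (-E) * (y ^ r * z ^ s)) := le_mul_of_one_le_left (by positivity) h2t
  · rcases le_total y z with hyz | hzy
    · -- y is the minimum
      right; left
      have hyx : y ≤ x := le_trans (le_of_eq (min_eq_left hyz).symm) hmx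
      have hkey : y ^ (-E) * (y ^ r * z ^ s) = y ^ (t - s) * z ^ s := by
        rw [show y ^ (-E) * (y ^ r * z ^ s) = y ^ (-E) * y ^ r * z ^ s from by ring,
          ← Real.rpow_add hy0, hE]; ring_nf
      rw [hkey]
      rcases le_total t 0 with ht0 | ht0
      · have h1 : x ^ t ≤ y ^ t := Real.rpow_le_rpow_of_nonpos hy0 hyx ht0
        have h2 : y ^ t = y ^ (t - s) * y ^ s := by rw [← Real.rpow_add hy0]; ring_nf
        have h3 : y ^ s ≤ z ^ s := Real.rpow_le_rpow hy0.le hyz hs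
        calc x ^ t ≤ y ^ (t-s) * y ^ s := by rw [← h2]; exact h1
          _ ≤ y ^ (t-s) * z ^ s := by
              exact mul_le_mul_of_nonneg_left h3 (Real.rpow_pos_of_pos hy0 _).le
          _ ≤ 2 ^ |t| * (y ^ (t-s) * z ^ s) := le_mul_of_one_le_left (by positivity) h2t
      · -- t ≥ 0
        have hx2z : x ≤ 2 * z := by nlinarith
        have h1 : x ^ t ≤ (2*z) ^ t := Real.rpow_le_rpow hx0.le hx2z ht0
        have h2 : (2*z) ^ t = 2 ^ t * z ^ t := Real.mul_rpow (by norm_num) hz0.le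
        have h3 : (2:ℝ) ^ t ≤ 2 ^ |t| :=
          Real.rpow_le_rpow_of_exponent_le one_le_two (le_abs_self t)
        have h4 : z ^ t = z ^ (t - s) * z ^ s := by rw [← Real.rpow_add hz0]; ring_nf
        have h5 : z ^ (t-s) ≤ y ^ (t-s) :=
          Real.rpow_le_rpow_of_nonpos hy0 hyz (by linarith)
        calc x ^ t ≤ 2 ^ t * z ^ t := by rw [← h2]; exact h1
          _ ≤ 2 ^ |t| * z ^ t := by
              apply mul_le_mul_of_nonneg_right h3 (Real.rpow_pos_of_pos hz0 _).le
          _ = 2 ^ |t| * (z ^ (t-s) * z ^ s) := by rw [← h4]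
          _ ≤ 2 ^ |t| * (y ^ (t-s) * z ^ s) := by
              apply mul_le_mul_of_nonneg_left _ (by positivity)
              exact mul_le_mul_of_nonneg_right h5 (Real.rpow_pos_of_pos hz0 _).le
    · -- z is the minimum
      right; right
      have hzx : z ≤ x := le_trans (le_of_eq (min_eq_right hzy).symm) hmx
      have hkey : z ^ (-E) * (y ^ r * z ^ s) = z ^ (t - r) * y ^ r := by
        rw [mul_comm (y ^ r) (z ^ s), ← mul_assoc, ← Real.rpow_add hz0, hE]; ring_nf
      rw [hkey]
      have hzs : (1:ℝ) ≤ z ^ s := Real.one_le_rpow hz hs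
      rcases le_total t 0 with ht0 | ht0
      · have h1 : x ^ t ≤ z ^ t := Real.rpow_le_rpow_of_nonpos hz0 hzx ht0
        have h2 : z ^ t = z ^ (t - r) * z ^ r := by rw [← Real.rpow_add hz0]; ring_nf
        have h3 : z ^ r ≤ y ^ r := Real.rpow_le_rpow hz0.le hzy hr
        calc x ^ t ≤ z ^ (t-r) * z ^ r := by rw [← h2]; exact h1
          _ ≤ z ^ (t-r) * y ^ r := by
              exact mul_le_mul_of_nonneg_left h3 (Real.rpow_pos_of_pos hz0 _).le
          _ ≤ 2 ^ |t| * (z ^ (t-r) * y ^ r) := le_mul_of_one_le_left (by positivity) h2t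
      · have hx2y : x ≤ 2 * y := by nlinarith
        have h1 : x ^ t ≤ (2*y) ^ t := Real.rpow_le_rpow hx0.le hx2y ht0
        have h2 : (2*y) ^ t = 2 ^ t * y ^ t := Real.mul_rpow (by norm_num) hy0.le
        have h3 : (2:ℝ) ^ t ≤ 2 ^ |t| :=
          Real.rpow_le_rpow_of_exponent_le one_le_two (le_abs_self t)
        have h4 : y ^ t = y ^ (t - r) * y ^ r := by rw [← Real.rpow_add hy0]; ring_nf
        have h5 : y ^ (t-r) ≤ z ^ (t-r) :=
          Real.rpow_le_rpow_of_nonpos hz0 hzy (by linarith)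
        calc x ^ t ≤ 2 ^ t * y ^ t := by rw [← h2]; exact h1
          _ ≤ 2 ^ |t| * y ^ t := by
              apply mul_le_mul_of_nonneg_right h3 (Real.rpow_pos_of_pos hy0 _).le
          _ = 2 ^ |t| * (y ^ (t-r) * y ^ r) := by rw [← h4]
          _ ≤ 2 ^ |t| * (z ^ (t-r) * y ^ r) := by
              apply mul_le_mul_of_nonneg_left _ (by positivity)
              exact mul_le_mul_of_nonneg_right h5 (Real.rpow_pos_of_pos hy0 _).le


variable {s r t : ℝ}

lemma hkerE (hs : 0 ≤ s) (hr : 0 ≤ r) (hts : t ≤ s) (htr : t ≤ r)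
    (a b : ℤ → ℂ) (k j : ℤ) :
    wgt t k * ((‖a (k-j)‖₊ : ℝ≥0∞) * (‖b j‖₊ : ℝ≥0∞)) ≤
      ENNReal.ofReal ((2:ℝ) ^ |t|) *
        ((wgt (-(s+r-t)) k + wgt (-(s+r-t)) (k-j) + wgt (-(s+r-t)) j) *
          ((wgt r (k-j) * (‖a (k-j)‖₊ : ℝ≥0∞)) * (wgt s j * (‖b j‖₊ : ℝ≥0∞)))) := by
  have hre := kernel_real (one_le_gz k) (one_le_gz (k-j)) (one_le_gz j) (gz_tri k j)
    hs hr hts htr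
  have hre2 : gz k ^ t * (‖a (k-j)‖ * ‖b j‖) ≤
      (2:ℝ)^|t| * ((gz k ^ (-(s+r-t)) + gz (k-j) ^ (-(s+r-t)) + gz j ^ (-(s+r-t))) *
        ((gz (k-j) ^ r * ‖a (k-j)‖) * (gz j ^ s * ‖b j‖))) := by
    have h := mul_le_mul_of_nonneg_right hre
      (mul_nonneg (norm_nonneg (a (k-j))) (norm_nonneg (b j)))
    calc gz k ^ t * (‖a (k-j)‖ * ‖b j‖) ≤
        2 ^ |t| * ((gz k ^ (-(s+r-t)) + gz (k-j) ^ (-(s+r-t)) + gz j ^ (-(s+r-t))) *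
          (gz (k-j) ^ r * gz j ^ s)) * (‖a (k-j)‖ * ‖b j‖) := h
      _ = _ := by ring
  have hnn : ∀ (m : ℤ) (x : ℝ), 0 ≤ gz m ^ x :=
    fun m x => (Real.rpow_pos_of_pos (gz_pos m) x).le
  calc wgt t k * ((‖a (k-j)‖₊ : ℝ≥0∞) * (‖b j‖₊ : ℝ≥0∞))
      = ENNReal.ofReal (gz k ^ t * (‖a (k-j)‖ * ‖b j‖)) := by
        rw [← ofReal_norm_eq_coe_nnnorm, ← ofReal_norm_eq_coe_nnnorm,
          ← ENNReal.ofReal_mul (norm_nonneg _), wgt,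
          ← ENNReal.ofReal_mul (hnn k t)]
    _ ≤ ENNReal.ofReal ((2:ℝ)^|t| *
          ((gz k ^ (-(s+r-t)) + gz (k-j) ^ (-(s+r-t)) + gz j ^ (-(s+r-t))) *
            ((gz (k-j) ^ r * ‖a (k-j)‖) * (gz j ^ s * ‖b j‖)))) :=
        ENNReal.ofReal_le_ofReal hre2
    _ = _ := by
        rw [ENNReal.ofReal_mul (by positivity : (0:ℝ) ≤ 2 ^ |t|),
          ENNReal.ofReal_mul (add_nonneg (add_nonneg (hnn _ _) (hnn _ _)) (hnn _ _))]
        congr 1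
        congr 1
        · rw [ENNReal.ofReal_add (add_nonneg (hnn _ _) (hnn _ _)) (hnn _ _),
            ENNReal.ofReal_add (hnn _ _) (hnn _ _)]
          rfl
        · rw [ENNReal.ofReal_mul (mul_nonneg (hnn _ _) (norm_nonneg _)),
            ENNReal.ofReal_mul (hnn _ _), ENNReal.ofReal_mul (hnn _ _),
            ofReal_norm_eq_coe_nnnorm, ofReal_norm_eq_coe_nnnorm]
          rfl

lemma master (hs : 0 ≤ s) (hr : 0 ≤ r) (hts : t ≤ s) (htr : t ≤ r) (a b : ℤ → ℂ) :
    ∑' k : ℤ, (wgt t k * (‖conv a b k‖₊ : ℝ≥0∞)) ^ 2 ≤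
      27 * ENNReal.ofReal ((2:ℝ) ^ |t|) ^ 2 * (∑' k : ℤ, (wgt (-(s+r-t)) k) ^ 2) *
        ((∑' k : ℤ, (wgt r k * (‖a k‖₊ : ℝ≥0∞)) ^ 2) *
          (∑' k : ℤ, (wgt s k * (‖b k‖₊ : ℝ≥0∞)) ^ 2)) := by
  set c₀ := ENNReal.ofReal ((2:ℝ) ^ |t|) with hc₀
  set Hh : ℤ → ℝ≥0∞ := fun k => wgt (-(s+r-t)) k with hHh
  set F : ℤ → ℝ≥0∞ := fun k => wgt r k * (‖a k‖₊ : ℝ≥0∞) with hF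
  set G : ℤ → ℝ≥0∞ := fun k => wgt s k * (‖b k‖₊ : ℝ≥0∞) with hG
  set Z := ∑' k : ℤ, (Hh k)^2 with hZ
  set PF := ∑' k : ℤ, (F k)^2 with hPF
  set PG := ∑' k : ℤ, (G k)^2 with hPG
  set S0 : ℤ → ℝ≥0∞ := fun k => ∑' j, F (k-j) * G j with hS0
  set S1 : ℤ → ℝ≥0∞ := fun k => ∑' j, (Hh (k-j) * F (k-j)) * G j with hS1
  set S2 : ℤ → ℝ≥0∞ := fun k => ∑' j, F (k-j) * (Hh j * G j) with hS2
  -- step 1 : pointwise bound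
  have step1 : ∀ k : ℤ, wgt t k * (‖conv a b k‖₊ : ℝ≥0∞) ≤
      c₀ * (Hh k * S0 k + S1 k + S2 k) := by
    intro k
    have stepA : wgt t k * (‖conv a b k‖₊ : ℝ≥0∞) ≤
        ∑' j, wgt t k * ((‖a (k-j)‖₊ : ℝ≥0∞) * (‖b j‖₊ : ℝ≥0∞)) := by
      rw [ENNReal.tsum_mul_left]
      apply mul_le_mul_right
      calc (‖conv a b k‖₊ : ℝ≥0∞) ≤ ∑' j, (‖a (k-j) * b j‖₊ : ℝ≥0∞) :=
            enn_tsum_norm_le _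
        _ = ∑' j, (‖a (k-j)‖₊ : ℝ≥0∞) * (‖b j‖₊ : ℝ≥0∞) := by
            apply tsum_congr; intro j; rw [nnnorm_mul, ENNReal.coe_mul]
    have stepB : ∑' j, wgt t k * ((‖a (k-j)‖₊ : ℝ≥0∞) * (‖b j‖₊ : ℝ≥0∞)) ≤
        ∑' j, c₀ * ((Hh k + Hh (k-j) + Hh j) * (F (k-j) * G j)) :=
      Summable.tsum_le_tsum (fun j => hkerE hs hr hts htr a b k j) ENNReal.summable ENNReal.summable
    have stepC : ∑' j, c₀ * ((Hh k + Hh (k-j) + Hh j) * (F (k-j) * G j)) =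
        c₀ * (Hh k * S0 k + S1 k + S2 k) := by
      rw [ENNReal.tsum_mul_left]
      congr 1
      calc ∑' j, (Hh k + Hh (k-j) + Hh j) * (F (k-j) * G j)
          = ∑' j, (Hh k * (F (k-j) * G j) +
              ((Hh (k-j) * F (k-j)) * G j + F (k-j) * (Hh j * G j))) := by
            apply tsum_congr; intro j; ring
        _ = (∑' j, Hh k * (F (k-j) * G j)) +
              ((∑' j, (Hh (k-j) * F (k-j)) * G j) + (∑' j, F (k-j) * (Hh j * G j))) := by
            rw [ENNReal.tsum_add, ENNReal.tsum_add]
        _ = Hh k * S0 k + S1 k + S2 k := by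
            rw [ENNReal.tsum_mul_left]; ring
    exact stepA.trans (stepB.trans_eq stepC)
  -- E0
  have E0 : ∑' k : ℤ, (Hh k * S0 k)^2 ≤ Z * (PF * PG) := by
    have hS0b : ∀ k : ℤ, (S0 k)^2 ≤ PF * PG := by
      intro k
      calc (S0 k)^2 ≤ (∑' j, (F (k-j))^2) * (∑' j, (G j)^2) := cs2 _ _
        _ = PF * PG := by rw [hPF, hPG, shift' (fun m => (F m)^2) k]
    calc ∑' k : ℤ, (Hh k * S0 k)^2 = ∑' k : ℤ, (Hh k)^2 * (S0 k)^2 := by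
          apply tsum_congr; intro k; rw [mul_pow]
      _ ≤ ∑' k : ℤ, (Hh k)^2 * (PF * PG) :=
          Summable.tsum_le_tsum (fun k => mul_le_mul_right (hS0b k) _)
            ENNReal.summable ENNReal.summable
      _ = Z * (PF * PG) := ENNReal.tsum_mul_right
  -- E1
  have E1 : ∑' k : ℤ, (S1 k)^2 ≤ Z * PF * PG := by
    set L := ∑' m : ℤ, Hh m * F m with hL
    have hL2 : L^2 ≤ Z * PF := cs2 Hh F
    have hS1b : ∀ k : ℤ, (S1 k)^2 ≤ L * ∑' j, (Hh (k-j) * F (k-j)) * (G j)^2 := by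
      intro k
      have h := wcs (fun j => Hh (k-j) * F (k-j)) G
      rwa [shift' (fun m => Hh m * F m) k] at h
    calc ∑' k : ℤ, (S1 k)^2 ≤ ∑' k : ℤ, L * ∑' j, (Hh (k-j) * F (k-j)) * (G j)^2 :=
          Summable.tsum_le_tsum hS1b ENNReal.summable ENNReal.summable
      _ = L * ∑' k : ℤ, ∑' j, (Hh (k-j) * F (k-j)) * (G j)^2 := ENNReal.tsum_mul_left
      _ = L * (L * PG) := by
          rw [conv_total (fun m => Hh m * F m) (fun j => (G j)^2), hPG]
      _ = L^2 * PG := by ring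
      _ ≤ Z * PF * PG := mul_le_mul_left hL2 _
  -- E2
  have E2 : ∑' k : ℤ, (S2 k)^2 ≤ Z * PG * PF := by
    set L' := ∑' m : ℤ, Hh m * G m with hL'
    have hL2 : L'^2 ≤ Z * PG := cs2 Hh G
    have hS2b : ∀ k : ℤ, (S2 k)^2 ≤ L' * ∑' j, (Hh j * G j) * (F (k-j))^2 := by
      intro k
      have h := wcs (fun j => Hh j * G j) (fun j => F (k-j))
      have e1 : S2 k = ∑' j, (Hh j * G j) * F (k-j) := by
        apply tsum_congr; intro j; ring
      rw [e1]
      exact h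
    calc ∑' k : ℤ, (S2 k)^2 ≤ ∑' k : ℤ, L' * ∑' j, (Hh j * G j) * (F (k-j))^2 :=
          Summable.tsum_le_tsum hS2b ENNReal.summable ENNReal.summable
      _ = L' * ∑' k : ℤ, ∑' j, (Hh j * G j) * (F (k-j))^2 := ENNReal.tsum_mul_left
      _ = L' * ∑' k : ℤ, ∑' j, (F (k-j))^2 * (Hh j * G j) := by
          congr 1; apply tsum_congr; intro k; apply tsum_congr; intro j; ring
      _ = L' * (PF * L') := by
          rw [conv_total (fun m => (F m)^2) (fun j => Hh j * G j), hPF]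
      _ = L'^2 * PF := by ring
      _ ≤ Z * PG * PF := mul_le_mul_left hL2 _
  -- assemble
  calc ∑' k : ℤ, (wgt t k * (‖conv a b k‖₊ : ℝ≥0∞)) ^ 2
      ≤ ∑' k : ℤ, (c₀ * (Hh k * S0 k + S1 k + S2 k))^2 :=
        Summable.tsum_le_tsum (fun k => pow_le_pow_left' (step1 k) 2)
          ENNReal.summable ENNReal.summable
    _ = c₀^2 * ∑' k : ℤ, (Hh k * S0 k + S1 k + S2 k)^2 := by
        rw [← ENNReal.tsum_mul_left]
        apply tsum_congr; intro k; rw [mul_pow]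
    _ ≤ c₀^2 * ∑' k : ℤ, 9 * ((Hh k * S0 k)^2 + (S1 k)^2 + (S2 k)^2) := by
        apply mul_le_mul_right
        exact Summable.tsum_le_tsum (fun k => sq_add3 _ _ _) ENNReal.summable ENNReal.summable
    _ = 9 * c₀^2 * ((∑' k : ℤ, (Hh k * S0 k)^2) + (∑' k : ℤ, (S1 k)^2) +
          (∑' k : ℤ, (S2 k)^2)) := by
        rw [ENNReal.tsum_mul_left, ← ENNReal.tsum_add, ← ENNReal.tsum_add]
        ring
    _ ≤ 9 * c₀^2 * (Z * (PF * PG) + Z * PF * PG + Z * PG * PF) := by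
        apply mul_le_mul_right
        gcongr
    _ = 27 * c₀^2 * Z * (PF * PG) := by ring


lemma pt (x : ℝ) (c : ℤ → ℂ) (k : ℤ) :
    (wgt x k * (‖c k‖₊ : ℝ≥0∞))^2 =
      ENNReal.ofReal (((1 + |k| : ℝ)) ^ (2*x) * ‖c k‖^2) := by
  have hnn : (0:ℝ) ≤ gz k ^ x := (Real.rpow_pos_of_pos (gz_pos k) x).le
  rw [← ofReal_norm_eq_coe_nnnorm, wgt, ← ENNReal.ofReal_mul hnn,
    ← ENNReal.ofReal_pow (mul_nonneg hnn (norm_nonneg _))]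
  congr 1
  rw [mul_pow]
  congr 1
  rw [← Real.rpow_natCast (gz k ^ x) 2, ← Real.rpow_mul (gz_pos k).le]
  have : x * (2:ℕ) = 2 * x := by push_cast; ring
  rw [this]
  congr 1
  simp [gz, Int.cast_abs]

lemma pt2 (x : ℝ) (k : ℤ) :
    (wgt (-x) k)^2 = ENNReal.ofReal (gz k ^ (-(2*x))) := by
  rw [wgt, ← ENNReal.ofReal_pow (Real.rpow_pos_of_pos (gz_pos k) _).le]
  congr 1
  rw [← Real.rpow_natCast (gz k ^ (-x)) 2, ← Real.rpow_mul (gz_pos k).le]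
  congr 1
  push_cast; ring

lemma Z_ne_top {e : ℝ} (he : 1/2 < e) :
    (∑' k : ℤ, (wgt (-e) k)^2) ≠ ⊤ := by
  have h : ∑' k : ℤ, (wgt (-e) k)^2 = ENNReal.ofReal (∑' k : ℤ, gz k ^ (-(2*e))) := by
    rw [ENNReal.ofReal_tsum_of_nonneg
      (fun k => (Real.rpow_pos_of_pos (gz_pos k) _).le) (summable_gz_rpow he)]
    exact tsum_congr (fun k => pt2 e k)
  rw [h]
  exact ENNReal.ofReal_ne_top

lemma tsum_eq_ofReal (x : ℝ) (c : ℤ → ℂ)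
    (hc : Summable fun k : ℤ => ((1 + |k| : ℝ)) ^ (2*x) * ‖c k‖^2) :
    ∑' k : ℤ, (wgt x k * (‖c k‖₊ : ℝ≥0∞))^2 =
      ENNReal.ofReal (∑' k : ℤ, ((1 + |k| : ℝ)) ^ (2*x) * ‖c k‖^2) := by
  rw [ENNReal.ofReal_tsum_of_nonneg (fun k => by positivity) hc]
  exact tsum_congr (fun k => pt x c k)


end ConvAux

theorem convolution_lemma_Ia (s r t : ℝ) (hs : 0 ≤ s) (hr : 0 ≤ r)
    (ht : t ≤ min s r) (hsrt : 1 / 2 < s + r - t) :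
    ∃ C > (0 : ℝ), ∀ a b : ℤ → ℂ, memh r a → memh s b →
      memh t (conv a b) ∧ hnorm t (conv a b) ≤ C * hnorm r a * hnorm s b := by
  obtain ⟨hts, htr⟩ := le_min_iff.mp ht
  have hZtop : (∑' k : ℤ, (ConvAux.wgt (-(s+r-t)) k)^2) ≠ ⊤ := ConvAux.Z_ne_top hsrt
  have hCtop : (27 * ENNReal.ofReal ((2:ℝ)^|t|)^2 *
      (∑' k : ℤ, (ConvAux.wgt (-(s+r-t)) k)^2)) ≠ ⊤ := by
    apply ENNReal.mul_ne_top _ hZtop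
    apply ENNReal.mul_ne_top (by simp)
    exact ENNReal.pow_ne_top ENNReal.ofReal_ne_top
  set Cc : ℝ := (27 * ENNReal.ofReal ((2:ℝ)^|t|)^2 *
      (∑' k : ℤ, (ConvAux.wgt (-(s+r-t)) k)^2)).toReal with hCc
  refine ⟨Cc ^ ((1:ℝ)/2) + 1, by positivity, ?_⟩
  intro a b ha hb
  have hmaster := ConvAux.master hs hr hts htr a b
  rw [ConvAux.tsum_eq_ofReal r a ha, ConvAux.tsum_eq_ofReal s b hb,
    tsum_congr (fun k => ConvAux.pt t (conv a b) k)] at hmaster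
  set Ta := ∑' k : ℤ, ((1 + |k| : ℝ)) ^ (2*r) * ‖a k‖^2 with hTa
  set Tb := ∑' k : ℤ, ((1 + |k| : ℝ)) ^ (2*s) * ‖b k‖^2 with hTb
  have hTa0 : 0 ≤ Ta := tsum_nonneg (fun k => by positivity)
  have hTb0 : 0 ≤ Tb := tsum_nonneg (fun k => by positivity)
  have hR : (27 * ENNReal.ofReal ((2:ℝ)^|t|)^2 *
      (∑' k : ℤ, (ConvAux.wgt (-(s+r-t)) k)^2)) *
      (ENNReal.ofReal Ta * ENNReal.ofReal Tb) ≠ ⊤ :=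
    ENNReal.mul_ne_top hCtop
      (ENNReal.mul_ne_top ENNReal.ofReal_ne_top ENNReal.ofReal_ne_top)
  have hsum : Summable (fun k : ℤ => ((1 + |k| : ℝ)) ^ (2*t) * ‖conv a b k‖^2) := by
    have hne : (∑' k : ℤ, ENNReal.ofReal (((1 + |k| : ℝ)) ^ (2*t) * ‖conv a b k‖^2)) ≠ ⊤ :=
      ne_top_of_le_ne_top hR hmaster
    refine (ENNReal.summable_toReal hne).congr (fun k => ?_)
    rw [ENNReal.toReal_ofReal (by positivity)]
  constructor
  · exact hsum
  · set Tc := ∑' k : ℤ, ((1 + |k| : ℝ)) ^ (2*t) * ‖conv a b k‖^2 with hTcd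
    have hTc0 : 0 ≤ Tc := tsum_nonneg (fun k => by positivity)
    have hofReal : ENNReal.ofReal Tc ≤ (27 * ENNReal.ofReal ((2:ℝ)^|t|)^2 *
        (∑' k : ℤ, (ConvAux.wgt (-(s+r-t)) k)^2)) *
        (ENNReal.ofReal Ta * ENNReal.ofReal Tb) := by
      rw [hTcd, ENNReal.ofReal_tsum_of_nonneg (fun k => by positivity) hsum]
      exact hmaster
    have hTc : Tc ≤ Cc * (Ta * Tb) := by
      have h1 := (ENNReal.toReal_le_toReal ENNReal.ofReal_ne_top hR).mpr hofReal
      rwa [ENNReal.toReal_ofReal hTc0, ENNReal.toReal_mul, ← hCc, ENNReal.toReal_mul,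
        ENNReal.toReal_ofReal hTa0, ENNReal.toReal_ofReal hTb0] at h1
    have hCc0 : 0 ≤ Cc := ENNReal.toReal_nonneg
    show Tc ^ ((1:ℝ)/2) ≤ (Cc ^ ((1:ℝ)/2) + 1) * hnorm r a * hnorm s b
    have h2 : hnorm r a = Ta ^ ((1:ℝ)/2) := rfl
    have h3 : hnorm s b = Tb ^ ((1:ℝ)/2) := rfl
    rw [h2, h3]
    calc Tc ^ ((1:ℝ)/2) ≤ (Cc * (Ta * Tb)) ^ ((1:ℝ)/2) :=
          Real.rpow_le_rpow hTc0 hTc (by norm_num)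
      _ = Cc ^ ((1:ℝ)/2) * (Ta ^ ((1:ℝ)/2) * Tb ^ ((1:ℝ)/2)) := by
          rw [Real.mul_rpow hCc0 (mul_nonneg hTa0 hTb0), Real.mul_rpow hTa0 hTb0]
      _ ≤ (Cc ^ ((1:ℝ)/2) + 1) * (Ta ^ ((1:ℝ)/2) * Tb ^ ((1:ℝ)/2)) := by
          apply mul_le_mul_of_nonneg_right (by linarith) (by positivity)
      _ = (Cc ^ ((1:ℝ)/2) + 1) * Ta ^ ((1:ℝ)/2) * Tb ^ ((1:ℝ)/2) := by ring

end
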